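/- arXiv:1201.3294 — 3 statements merged into one kernel-verified Lean document; each statement's English description precedes it below -/
import Mathlib

section
/- Let q be an even prime power. Every codeword of the dual code of the binary code of points and lines of Q(4,q) has even weight. -/
open scoped Classical

noncomputable section

variable (F : Type*) [Field F] [Fintype F]

/-- The standard non-singular parabolic quadratic form on `F^5` defining `Q(4,q)`. -/
def Q4Form : (Fin 5 → F) → F := fun v => v 0 * v 1 + v 2 * v 3 + v 4 ^ 2

/-- Points of the parabolic quadric `Q(4,q)`: singular projective points, i.e.
one-dimensional subspaces on which the form vanishes. -/
def Q4Point := {W : Submodule F (Fin 5 → F) //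
  Module.finrank F W = 1 ∧ ∀ v ∈ W, Q4Form F v = 0}

/-- Lines of the parabolic quadric `Q(4,q)`: totally singular two-dimensional subspaces. -/
def Q4Line := {W : Submodule F (Fin 5 → F) //
  Module.finrank F W = 2 ∧ ∀ v ∈ W, Q4Form F v = 0}

set_option linter.unusedSectionVars false

def Q4B : (Fin 5 → F) → (Fin 5 → F) → F := fun u v =>
  u 0 * v 1 + u 1 * v 0 + u 2 * v 3 + u 3 * v 2

variable {F}

lemma char_two_of_even_card {q : ℕ} (hq : Fintype.card F = q) (hqe : Even q) :
    (2 : F) = 0 := by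
  obtain ⟨p, hchar⟩ := CharP.exists F
  obtain ⟨n, hp, hcard⟩ := FiniteField.card F p
  have h2 : (2 : ℕ) ∣ p ^ (n : ℕ) := by
    rw [← hcard, hq]; exact hqe.two_dvd
  have : p = 2 := by
    have := (Nat.Prime.dvd_of_dvd_pow (p := 2) (Nat.prime_two) h2)
    exact ((Nat.prime_dvd_prime_iff_eq Nat.prime_two hp).mp this).symm
  subst this
  exact_mod_cast CharP.cast_eq_zero F 2

lemma Q4Form_add (h2 : (2 : F) = 0) (u v : Fin 5 → F) :
    Q4Form F (u + v) = Q4Form F u + Q4Form F v + Q4B F u v := by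
  simp only [Q4Form, Q4B, Pi.add_apply]
  linear_combination u 4 * v 4 * h2

lemma Q4Form_smul (a : F) (v : Fin 5 → F) :
    Q4Form F (a • v) = a ^ 2 * Q4Form F v := by
  simp only [Q4Form, Pi.smul_apply, smul_eq_mul]; ring

lemma Q4B_smul_smul (a b : F) (u v : Fin 5 → F) :
    Q4B F (a • u) (b • v) = a * b * Q4B F u v := by
  simp only [Q4B, Pi.smul_apply, smul_eq_mul]; ring

lemma Q4B_self (h2 : (2 : F) = 0) (v : Fin 5 → F) : Q4B F v v = 0 := by
  simp only [Q4B]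
  linear_combination (v 0 * v 1 + v 2 * v 3) * h2

lemma sq_bijective (h2 : (2 : F) = 0) : Function.Bijective (fun x : F => x * x) := by
  rw [Finite.injective_iff_bijective.symm]
  intro x y hxy
  simp only at hxy
  have h : (x - y) * (x - y) = 0 := by linear_combination hxy + (y * y - x * y) * h2
  exact sub_eq_zero.mp (mul_self_eq_zero.mp h)

def sqrtF (h2 : (2 : F) = 0) (x : F) : F := ((sq_bijective h2).surjective x).choose

lemma sqrtF_spec (h2 : (2 : F) = 0) (x : F) : sqrtF h2 x * sqrtF h2 x = x :=
  ((sq_bijective h2).surjective x).choose_spec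

lemma sqrtF_mul_self (h2 : (2 : F) = 0) (x : F) : sqrtF h2 (x * x) = x :=
  (sq_bijective h2).injective (by simpa using sqrtF_spec h2 (x * x))

def Q4ell (p : Fin 5 → F) : (Fin 4 → F) →ₗ[F] F :=
  p 1 • LinearMap.proj 0 + p 0 • LinearMap.proj 1 + p 3 • LinearMap.proj 2 +
    p 2 • LinearMap.proj 3

lemma Q4ell_apply (p : Fin 5 → F) (w : Fin 4 → F) :
    Q4ell p w = p 1 * w 0 + p 0 * w 1 + p 3 * w 2 + p 2 * w 3 := by
  simp [Q4ell, LinearMap.proj]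


lemma Q4ell_ne_zero {p : Fin 5 → F} (hp : p ≠ 0) (hQp : Q4Form F p = 0) :
    ∃ w : Fin 4 → F, Q4ell p w ≠ 0 := by
  by_contra h
  push_neg at h
  have e : ∀ i : Fin 4, p 1 * (Pi.single i (1:F) : Fin 4 → F) 0 +
      p 0 * (Pi.single i (1:F) : Fin 4 → F) 1 + p 3 * (Pi.single i (1:F) : Fin 4 → F) 2 +
      p 2 * (Pi.single i (1:F) : Fin 4 → F) 3 = 0 := fun i => by
    rw [← Q4ell_apply]; exact h _
  have h1 := e 0; have h0 := e 1; have h3 := e 2; have h2' := e 3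
  simp [Pi.single_apply] at h0 h1 h3 h2'
  have h4 : p 4 = 0 := by
    have := hQp
    simp only [Q4Form, h0, h1, h2', h3, zero_mul, mul_zero, zero_add, add_zero] at this
    exact pow_eq_zero_iff (n := 2) (by norm_num) |>.mp this
  apply hp
  funext i
  fin_cases i <;> simp [h0, h1, h2', h3, h4]

lemma card_ker_Q4ell {p : Fin 5 → F} (hp : p ≠ 0) (hQp : Q4Form F p = 0) :
    Fintype.card (LinearMap.ker (Q4ell p)) = Fintype.card F ^ 3 := by
  obtain ⟨w, hw⟩ := Q4ell_ne_zero hp hQp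
  have hrange : LinearMap.range (Q4ell p) = ⊤ := by
    rw [LinearMap.range_eq_top]
    intro y
    exact ⟨(y * (Q4ell p w)⁻¹) • w, by rw [map_smul, smul_eq_mul]; field_simp⟩
  have hrk := LinearMap.finrank_range_add_finrank_ker (Q4ell p)
  rw [hrange, finrank_top, Module.finrank_self, Module.finrank_fin_fun] at hrk
  have hker : Module.finrank F (LinearMap.ker (Q4ell p)) = 3 := by omega
  rw [Module.card_eq_pow_finrank (K := F), hker]

lemma card_singular_perp (h2 : (2 : F) = 0) {p : Fin 5 → F} (hp : p ≠ 0)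
    (hQp : Q4Form F p = 0) :
    (Finset.univ.filter fun v : Fin 5 → F => Q4Form F v = 0 ∧ Q4B F p v = 0).card
      = Fintype.card F ^ 3 := by
  rw [← card_ker_Q4ell hp hQp]
  have hK : Fintype.card (LinearMap.ker (Q4ell p))
      = (Finset.univ.filter fun w : Fin 4 → F => Q4ell p w = 0).card := by
    rw [Fintype.card_subtype]
    apply Finset.card_nbij' id id <;> intro a ha <;> simp_all [LinearMap.mem_ker]
  rw [hK]
  refine Finset.card_nbij' (fun v => ![v 0, v 1, v 2, v 3])
    (fun w => ![w 0, w 1, w 2, w 3, sqrtF h2 (w 0 * w 1 + w 2 * w 3)]) ?_ ?_ ?_ ?_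
  · intro v hv
    simp only [Finset.mem_coe, Finset.mem_filter, Finset.mem_univ, true_and] at hv ⊢
    rw [Q4ell_apply]
    have := hv.2
    simp only [Q4B] at this
    simp only [Matrix.cons_val_zero, Matrix.cons_val_one, Matrix.head_cons, Matrix.cons_val]
    norm_num
    linear_combination this
  · intro w hw
    simp only [Finset.mem_coe, Finset.mem_filter, Finset.mem_univ, true_and] at hw ⊢
    rw [Q4ell_apply] at hw
    constructor
    · simp only [Q4Form]
      simp only [Matrix.cons_val_zero, Matrix.cons_val_one, Matrix.head_cons, Matrix.cons_val]
      norm_num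
      linear_combination sqrtF_spec h2 (w 0 * w 1 + w 2 * w 3) +
        (w 0 * w 1 + w 2 * w 3) * h2
    · simp only [Q4B]
      simp only [Matrix.cons_val_zero, Matrix.cons_val_one, Matrix.head_cons, Matrix.cons_val]
      norm_num
      linear_combination hw
  · intro v hv
    simp only [Finset.mem_coe, Finset.mem_filter, Finset.mem_univ, true_and] at hv
    obtain ⟨hQv, hBv⟩ := hv
    simp only [Q4Form] at hQv
    have h4 : v 0 * v 1 + v 2 * v 3 = v 4 * v 4 := by
      linear_combination hQv - v 4 ^ 2 * h2
    funext i
    fin_cases i <;> simp [h4, sqrtF_mul_self]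
  · intro w hw
    funext i
    fin_cases i <;> simp

instance : Finite (Submodule F (Fin 5 → F)) :=
  Finite.of_injective (fun W => (W : Set (Fin 5 → F))) SetLike.coe_injective

instance : Finite (Q4Point F) :=
  inferInstanceAs (Finite {W : Submodule F (Fin 5 → F) //
    Module.finrank F W = 1 ∧ ∀ v ∈ W, Q4Form F v = 0})

instance : Finite (Q4Line F) :=
  inferInstanceAs (Finite {W : Submodule F (Fin 5 → F) //
    Module.finrank F W = 2 ∧ ∀ v ∈ W, Q4Form F v = 0})

noncomputable instance : Fintype (Q4Point F) := Fintype.ofFinite _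
noncomputable instance : Fintype (Q4Line F) := Fintype.ofFinite _

lemma Q4Point.exists_span (P : Q4Point F) :
    ∃ p : Fin 5 → F, p ≠ 0 ∧ P.1 = Submodule.span F {p} := by
  have h1 := P.2.1
  have hbot : P.1 ≠ ⊥ := by
    intro h
    rw [h] at h1
    simp at h1
  obtain ⟨p, hpmem, hp0⟩ := Submodule.exists_mem_ne_zero_of_ne_bot hbot
  refine ⟨p, hp0, ?_⟩
  have hle : Submodule.span F {p} ≤ P.1 := by
    rw [Submodule.span_le, Set.singleton_subset_iff]; exact hpmem
  exact (Submodule.eq_of_le_of_finrank_eq hle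
    (by rw [finrank_span_singleton hp0, h1])).symm

lemma card_filter_mem_submodule (W : Submodule F (Fin 5 → F)) :
    (Finset.univ.filter fun v => v ∈ W).card = Fintype.card F ^ Module.finrank F W := by
  rw [← Fintype.card_subtype]
  exact Module.card_eq_pow_finrank

lemma Q4B_eq_zero_of_mem {L : Q4Line F} (h2 : (2 : F) = 0) {u v : Fin 5 → F}
    (hu : u ∈ L.1) (hv : v ∈ L.1) : Q4B F u v = 0 := by
  have hQ := L.2.2
  have h := hQ (u + v) (L.1.add_mem hu hv)
  rw [Q4Form_add h2] at h
  rw [hQ u hu, hQ v hv] at h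
  simpa using h

lemma span_pair_line (h2 : (2 : F) = 0) {p v : Fin 5 → F} (hp0 : p ≠ 0)
    (hQp : Q4Form F p = 0) (hQv : Q4Form F v = 0) (hB : Q4B F p v = 0)
    (hvns : v ∉ Submodule.span F {p}) :
    Module.finrank F (Submodule.span F {p, v}) = 2 ∧
      ∀ u ∈ Submodule.span F {p, v}, Q4Form F u = 0 := by
  have hv0 : v ≠ 0 := fun h => hvns (h ▸ Submodule.zero_mem _)
  constructor
  · have hsplit : Submodule.span F ({p, v} : Set (Fin 5 → F)) =
        Submodule.span F {p} ⊔ Submodule.span F {v} := by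
      rw [show ({p, v} : Set (Fin 5 → F)) = insert p {v} from rfl,
        Submodule.span_insert]
    have hinf : Submodule.span F {p} ⊓ Submodule.span F {v} = ⊥ := by
      rw [eq_bot_iff]
      rintro u ⟨hu1, hu2⟩
      obtain ⟨a, ha⟩ := Submodule.mem_span_singleton.mp hu1
      obtain ⟨b, hb⟩ := Submodule.mem_span_singleton.mp hu2
      simp only [Submodule.mem_bot]
      by_contra hu0
      have hb0 : b ≠ 0 := by rintro rfl; simp at hb; exact hu0 hb.symm
      exact hvns (Submodule.mem_span_singleton.mpr
        ⟨b⁻¹ * a, by rw [mul_smul, ha, ← hb, inv_smul_smul₀ hb0]⟩)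
    have := Submodule.finrank_sup_add_finrank_inf_eq
      (Submodule.span F {p}) (Submodule.span F {v})
    rw [hinf, finrank_span_singleton hp0, finrank_span_singleton hv0] at this
    rw [hsplit]
    simp only [finrank_bot] at this
    omega
  · intro u hu
    obtain ⟨a, b, hab⟩ := Submodule.mem_span_pair.mp hu
    rw [← hab, Q4Form_add h2, Q4Form_smul, Q4Form_smul, Q4B_smul_smul,
      hQp, hQv, hB]
    ring

lemma Q4B_smul_right (h2 : (2 : F) = 0) (p : Fin 5 → F) (a : F) :
    Q4B F p (a • p) = 0 := by
  have h := Q4B_smul_smul (1 : F) a p p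
  rw [one_smul] at h
  rw [h, Q4B_self h2]
  ring

lemma card_lines_through (h2 : (2 : F) = 0) (P : Q4Point F) :
    (Finset.univ.filter fun L : Q4Line F => P.1 ≤ L.1).card = Fintype.card F + 1 := by
  classical
  set q := Fintype.card F with hqdef
  obtain ⟨p, hp0, hPspan⟩ := P.exists_span
  have hpmem : p ∈ P.1 := hPspan ▸ Submodule.mem_span_singleton_self p
  have hQp : Q4Form F p = 0 := P.2.2 p hpmem
  set T : Finset (Fin 5 → F) :=
    Finset.univ.filter (fun v => Q4Form F v = 0 ∧ Q4B F p v = 0) with hTdef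
  set Pfin : Finset (Fin 5 → F) := Finset.univ.filter (· ∈ P.1) with hPfdef
  have hPT : Pfin ⊆ T := by
    intro u hu
    simp only [hPfdef, Finset.mem_filter, Finset.mem_univ, true_and] at hu
    obtain ⟨a, ha⟩ := Submodule.mem_span_singleton.mp (hPspan ▸ hu)
    simp only [hTdef, Finset.mem_filter, Finset.mem_univ, true_and]
    exact ⟨P.2.2 u hu, by rw [← ha, Q4B_smul_right h2]⟩
  have hcardT : T.card = q ^ 3 := card_singular_perp h2 hp0 hQp
  have hcardP : Pfin.card = q := by
    rw [hPfdef, card_filter_mem_submodule, P.2.1, pow_one]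
  set lines : Finset (Q4Line F) :=
    Finset.univ.filter (fun L : Q4Line F => P.1 ≤ L.1) with hldef
  -- every line through P gives a Q4Line containing v outside P
  have line_eq : ∀ L : Q4Line F, P.1 ≤ L.1 → ∀ v ∈ L.1, v ∉ P.1 →
      L.1 = Submodule.span F {p, v} := by
    intro L hPL v hv hvP
    have hvns : v ∉ Submodule.span F {p} := fun h => hvP (hPspan ▸ h)
    have hB : Q4B F p v = 0 := Q4B_eq_zero_of_mem h2 (hPL hpmem) hv
    have hfr := (span_pair_line h2 hp0 hQp (L.2.2 v hv) hB hvns).1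
    have hle : Submodule.span F ({p, v} : Set (Fin 5 → F)) ≤ L.1 := by
      rw [Submodule.span_le]
      rintro u (rfl | rfl)
      · exact hPL hpmem
      · exact hv
    exact (Submodule.eq_of_le_of_finrank_eq hle (by rw [hfr, L.2.1])).symm
  have hunion : T \ Pfin = lines.biUnion
      (fun L => (Finset.univ.filter (· ∈ L.1)) \ Pfin) := by
    ext v
    simp only [Finset.mem_sdiff, Finset.mem_biUnion, Finset.mem_filter,
      Finset.mem_univ, true_and, hTdef, hldef, hPfdef]
    constructor
    · rintro ⟨⟨hQv, hBv⟩, hvP⟩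
      have hvns : v ∉ Submodule.span F {p} := fun h => hvP (hPspan ▸ h)
      refine ⟨⟨Submodule.span F {p, v}, span_pair_line h2 hp0 hQp hQv hBv hvns⟩,
        ?_, ?_, hvP⟩
      · rw [hPspan]
        exact Submodule.span_mono (Set.singleton_subset_iff.mpr (by simp))
      · exact Submodule.subset_span (by simp)
    · rintro ⟨L, hPL, hvL, hvP⟩
      exact ⟨⟨L.2.2 v hvL, Q4B_eq_zero_of_mem h2 (hPL hpmem) hvL⟩, hvP⟩
  have hdisj : ∀ L1 ∈ lines, ∀ L2 ∈ lines, L1 ≠ L2 →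
      Disjoint ((Finset.univ.filter (· ∈ L1.1)) \ Pfin)
        ((Finset.univ.filter (· ∈ L2.1)) \ Pfin) := by
    intro L1 hL1 L2 hL2 hne
    simp only [hldef, Finset.mem_filter, Finset.mem_univ, true_and] at hL1 hL2
    rw [Finset.disjoint_left]
    intro v hv1 hv2
    simp only [Finset.mem_sdiff, Finset.mem_filter, Finset.mem_univ, true_and,
      hPfdef] at hv1 hv2
    exact hne (Subtype.ext ((line_eq L1 hL1 v hv1.1 hv1.2).trans
      (line_eq L2 hL2 v hv2.1 hv2.2).symm))
  have hcardfib : ∀ L ∈ lines,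
      ((Finset.univ.filter (· ∈ L.1)) \ Pfin).card = q ^ 2 - q := by
    intro L hL
    simp only [hldef, Finset.mem_filter, Finset.mem_univ, true_and] at hL
    have hsub : Pfin ⊆ Finset.univ.filter (· ∈ L.1) := by
      intro u hu
      simp only [hPfdef, Finset.mem_filter, Finset.mem_univ, true_and] at hu ⊢
      exact hL hu
    rw [Finset.card_sdiff_of_subset hsub, hcardP, card_filter_mem_submodule, L.2.1]
  have hmain : q ^ 3 - q = lines.card * (q ^ 2 - q) := by
    have h1 : (T \ Pfin).card = q ^ 3 - q := by
      rw [Finset.card_sdiff_of_subset hPT, hcardT, hcardP]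
    rw [← h1, hunion, Finset.card_biUnion hdisj,
      Finset.sum_congr rfl hcardfib, Finset.sum_const, smul_eq_mul]
  have hq2 : 2 ≤ q := Fintype.one_lt_card
  have hint : (lines.card : ℤ) * (q ^ 2 - q) = q ^ 3 - q := by
    have h1 : (q : ℤ) ≤ (q : ℤ) ^ 2 := by nlinarith [hq2]
    have h3 : (q : ℤ) ≤ (q : ℤ) ^ 3 := by nlinarith [hq2]
    have := congrArg (Nat.cast : ℕ → ℤ) hmain
    push_cast [Nat.cast_sub (by nlinarith [hq2] : q ≤ q ^ 2),
      Nat.cast_sub (by nlinarith [hq2] : q ≤ q ^ 3)] at this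
    linarith [this]
  have hfinal : (lines.card : ℤ) = q + 1 := by
    have hpos : (q : ℤ) ^ 2 - q ≠ 0 := by nlinarith [hq2]
    have : ((lines.card : ℤ) - (q + 1)) * ((q : ℤ) ^ 2 - q) = 0 := by ring_nf; nlinarith [hint]
    rcases mul_eq_zero.mp this with h | h
    · linarith [h]
    · exact absurd h hpos
  exact_mod_cast hfinal


variable (F)

/-- Every codeword of the dual of the binary code of points and lines of `Q(4,q)`,
`q` even, has even weight. -/
theorem dual_code_Q4_even_weight (q : ℕ) (hq : Fintype.card F = q) (hqe : Even q)
    (c : Q4Point F → ZMod 2)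
    (hc : ∀ L : Q4Line F, ∑ᶠ P ∈ {P : Q4Point F | P.1 ≤ L.1}, c P = 0) :
    Even (Set.ncard {P : Q4Point F | c P ≠ 0}) := by
  classical
  have h2 : (2 : F) = 0 := char_two_of_even_card hq hqe
  have hc' : ∀ L : Q4Line F,
      ∑ P ∈ Finset.univ.filter (fun P : Q4Point F => P.1 ≤ L.1), c P = 0 := by
    intro L
    have h := hc L
    rwa [finsum_mem_eq_toFinset_sum, Set.toFinset_setOf] at h
  have hone : ((Fintype.card F + 1 : ℕ) : ZMod 2) = 1 := by
    rw [hq]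
    push_cast
    rw [(ZMod.natCast_eq_zero_iff q 2).mpr hqe.two_dvd]
    ring
  have hswap : ∑ P : Q4Point F, c P = 0 := by
    have h0 : (0 : ZMod 2) = ∑ L : Q4Line F,
        ∑ P ∈ Finset.univ.filter (fun P : Q4Point F => P.1 ≤ L.1), c P := by
      simp [hc']
    calc ∑ P : Q4Point F, c P
        = ∑ P : Q4Point F, ((Fintype.card F + 1 : ℕ) : ZMod 2) * c P := by
          simp [hone]
      _ = ∑ P : Q4Point F,
            ((Finset.univ.filter fun L : Q4Line F => P.1 ≤ L.1).card : ZMod 2) * c P := by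
          refine Finset.sum_congr rfl fun P _ => ?_
          rw [card_lines_through h2 P]
      _ = ∑ P : Q4Point F, ∑ L : Q4Line F, if P.1 ≤ L.1 then c P else 0 := by
          refine Finset.sum_congr rfl fun P _ => ?_
          rw [← Finset.sum_filter, Finset.sum_const, nsmul_eq_mul]
      _ = ∑ L : Q4Line F, ∑ P : Q4Point F, if P.1 ≤ L.1 then c P else 0 :=
          Finset.sum_comm
      _ = ∑ L : Q4Line F,
            ∑ P ∈ Finset.univ.filter (fun P : Q4Point F => P.1 ≤ L.1), c P := by
          refine Finset.sum_congr rfl fun L _ => ?_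
          rw [Finset.sum_filter]
      _ = 0 := h0.symm
  have hcard : {P : Q4Point F | c P ≠ 0}.ncard
      = (Finset.univ.filter fun P : Q4Point F => c P ≠ 0).card := by
    rw [Set.ncard_eq_toFinset_card', Set.toFinset_setOf]
  have hsum : ((Finset.univ.filter fun P : Q4Point F => c P ≠ 0).card : ZMod 2) = 0 := by
    have h1 : ∑ P ∈ Finset.univ.filter (fun P : Q4Point F => c P ≠ 0), c P = 0 := by
      rw [Finset.sum_filter_ne_zero]
      exact hswap
    have h2' : ∑ P ∈ Finset.univ.filter (fun P : Q4Point F => c P ≠ 0), c P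
        = ((Finset.univ.filter fun P : Q4Point F => c P ≠ 0).card : ZMod 2) := by
      rw [Finset.sum_congr rfl (fun P hP => ?_), Finset.sum_const, nsmul_eq_mul, mul_one]
      have : c P ≠ 0 := (Finset.mem_filter.mp hP).2
      have hall : ∀ x : ZMod 2, x ≠ 0 → x = 1 := by decide
      exact hall _ this
    rw [← h2', h1]
  rw [hcard]
  exact even_iff_two_dvd.mpr ((ZMod.natCast_eq_zero_iff _ 2).mp hsum)
end
end

section
/- Let S_L be a set of at most 4(q+1) lines in PG(3,q), q >= 16, such that every plane of PG(3,q) contains 0 or at least 2 lines of S_L and every point of PG(3,q) lies on 0 or at least 2 lines of S_L. Then every point of PG(3,q) lies on at most 4 lines of S_L, or on at least q-1 lines of S_L. -/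
open scoped Classical

set_option maxHeartbeats 2000000
set_option synthInstance.maxHeartbeats 400000

noncomputable section

variable (F : Type*) [Field F] [Fintype F]

/-- Points of `PG(3,q)`: one-dimensional subspaces of `F^4`. -/
def PGPoint := {W : Submodule F (Fin 4 → F) // Module.finrank F W = 1}

/-- Lines of `PG(3,q)`: two-dimensional subspaces of `F^4`. -/
def PGLine := {W : Submodule F (Fin 4 → F) // Module.finrank F W = 2}

/-- Planes of `PG(3,q)`: three-dimensional subspaces of `F^4`. -/
def PGPlane := {W : Submodule F (Fin 4 → F) // Module.finrank F W = 3}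

lemma sup_of_two_lines' {W₁ W₂ P : Submodule F (Fin 4 → F)} (h1 : Module.finrank F W₁ = 2)
    (h2 : Module.finrank F W₂ = 2) (hne : W₁ ≠ W₂) (hP : Module.finrank F P = 1)
    (hP1 : P ≤ W₁) (hP2 : P ≤ W₂) : Module.finrank F ↥(W₁ ⊔ W₂) = 3 := by
  have hinfle : Module.finrank F ↥(W₁ ⊓ W₂) ≤ 2 := h1 ▸ Submodule.finrank_mono inf_le_left
  have hinfge : 1 ≤ Module.finrank F ↥(W₁ ⊓ W₂) :=
    hP ▸ Submodule.finrank_mono (le_inf hP1 hP2)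
  have hne2 : Module.finrank F ↥(W₁ ⊓ W₂) ≠ 2 := by
    intro h
    have : W₁ ⊓ W₂ = W₁ := Submodule.eq_of_le_of_finrank_le inf_le_left (by omega)
    exact hne (Submodule.eq_of_le_of_finrank_le (this ▸ inf_le_right) (by omega))
  have := Submodule.finrank_sup_add_finrank_inf_eq W₁ W₂
  omega

lemma sup_line_point' {M P : Submodule F (Fin 4 → F)} (hM : Module.finrank F M = 2)
    (hP : Module.finrank F P = 1) (h : ¬ P ≤ M) : Module.finrank F ↥(M ⊔ P) = 3 := by
  have hinfle : Module.finrank F ↥(M ⊓ P) ≤ 1 := hP ▸ Submodule.finrank_mono inf_le_right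
  have hne1 : Module.finrank F ↥(M ⊓ P) ≠ 1 := by
    intro hh
    have : M ⊓ P = P := Submodule.eq_of_le_of_finrank_le inf_le_right (by omega)
    exact h (this ▸ inf_le_left)
  have := Submodule.finrank_sup_add_finrank_inf_eq M P
  omega

lemma exists_planes (W : Submodule F (Fin 4 → F)) (hW : Module.finrank F W = 2) :
    ∃ f : Option F → PGPlane F, Function.Injective f ∧ ∀ o, W ≤ (f o).1 := by
  obtain ⟨W', hcompl⟩ := Submodule.exists_isCompl W
  have hV : Module.finrank F (Fin 4 → F) = 4 := Module.finrank_fin_fun F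
  have hW' : Module.finrank F W' = 2 := by
    have := Submodule.finrank_add_eq_of_isCompl hcompl; omega
  let b := Module.finBasisOfFinrankEq F W' hW'
  let p : Option F → W' := fun o => o.elim (b 1) (fun a => b 0 + a • b 1)
  have hr0 : ∀ o, b.repr (p o) 0 = o.elim 0 (fun _ => 1) := by
    rintro (_|a) <;>
      simp only [p, Option.elim, map_add, map_smul, Module.Basis.repr_self, Finsupp.coe_add,
        Finsupp.coe_smul, Pi.add_apply, Pi.smul_apply, Finsupp.single_apply] <;> simp
  have hr1 : ∀ o, b.repr (p o) 1 = o.elim 1 id := by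
    rintro (_|a) <;>
      simp only [p, Option.elim, map_add, map_smul, Module.Basis.repr_self, Finsupp.coe_add,
        Finsupp.coe_smul, Pi.add_apply, Pi.smul_apply, Finsupp.single_apply] <;> simp
  have hp0 : ∀ o, p o ≠ 0 := by
    rintro (_|a) h
    · have := hr1 none; rw [h] at this; simp at this
    · have := hr0 (some a); rw [h] at this; simp at this
  have hpind : ∀ o o' (c : F), (p o : Fin 4 → F) = c • (p o' : Fin 4 → F) → o = o' := by
    intro o o' c h
    have h' : p o = c • p o' := by
      apply Subtype.ext; rw [h]; rfl
    have h0 : b.repr (p o) 0 = c * b.repr (p o') 0 := by rw [h']; simp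
    have h1 : b.repr (p o) 1 = c * b.repr (p o') 1 := by rw [h']; simp
    rw [hr0 o, hr0 o'] at h0
    rw [hr1 o, hr1 o'] at h1
    match o, o' with
    | none, none => rfl
    | none, some a => simp at h0 h1; subst h0; simp at h1
    | some a, none => simp at h0
    | some a, some a' => simp at h0 h1; subst h0; rw [one_mul] at h1; rw [h1]
  have hdim : ∀ o, Module.finrank F ↥(W ⊔ Submodule.span F {(p o : Fin 4 → F)}) = 3 := by
    intro o
    have hsp1 : Module.finrank F ↥(Submodule.span F {(p o : Fin 4 → F)}) = 1 :=
      finrank_span_singleton (by simpa using hp0 o)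
    have hinf : W ⊓ Submodule.span F {(p o : Fin 4 → F)} = ⊥ := by
      apply le_bot_iff.mp
      calc W ⊓ Submodule.span F {(p o : Fin 4 → F)} ≤ W ⊓ W' := by
            apply inf_le_inf_left
            rw [Submodule.span_le, Set.singleton_subset_iff]; exact (p o).2
        _ = ⊥ := hcompl.inf_eq_bot
    have := Submodule.finrank_sup_add_finrank_inf_eq W (Submodule.span F {(p o : Fin 4 → F)})
    rw [hinf, hsp1, hW, finrank_bot] at this
    omega
  refine ⟨fun o => ⟨W ⊔ Submodule.span F {(p o : Fin 4 → F)}, hdim o⟩, ?_, fun o => le_sup_left⟩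
  intro o o' h
  have h' : W ⊔ Submodule.span F {(p o : Fin 4 → F)} = W ⊔ Submodule.span F {(p o' : Fin 4 → F)} :=
    congrArg Subtype.val h
  have hmem : (p o : Fin 4 → F) ∈ W ⊔ Submodule.span F {(p o' : Fin 4 → F)} := by
    rw [← h']; exact Submodule.mem_sup_right (Submodule.mem_span_singleton_self _)
  obtain ⟨y, hy, z, hz, hyz⟩ := Submodule.mem_sup.mp hmem
  obtain ⟨c, rfl⟩ := Submodule.mem_span_singleton.mp hz
  have hyW' : y ∈ W' := by
    have : y = (p o : Fin 4 → F) - c • (p o' : Fin 4 → F) := by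
      rw [← hyz]; ring
    rw [this]
    exact sub_mem (p o).2 (Submodule.smul_mem _ _ (p o').2)
  have hy0 : y = 0 := by
    have : y ∈ W ⊓ W' := ⟨hy, hyW'⟩
    rwa [hcompl.inf_eq_bot, Submodule.mem_bot] at this
  apply hpind o o' c
  rw [← hyz, hy0, zero_add]

/-- If `S` is a set of at most `4(q+1)` lines of `PG(3,q)`, `q ≥ 16`, such that every
plane contains `0` or at least `2` lines of `S` and every point lies on `0` or at least
`2` lines of `S`, then every point lies on at most `4` or on at least `q-1` lines of `S`. -/
theorem line_set_point_degree_dichotomy (q : ℕ) (hq : Fintype.card F = q) (hq16 : 16 ≤ q)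
    (S : Set (PGLine F)) (hcard : S.ncard ≤ 4 * (q + 1))
    (hplane : ∀ π : PGPlane F,
      Set.ncard {L | L ∈ S ∧ L.1 ≤ π.1} = 0 ∨ 2 ≤ Set.ncard {L | L ∈ S ∧ L.1 ≤ π.1})
    (hpoint : ∀ P : PGPoint F,
      Set.ncard {L | L ∈ S ∧ P.1 ≤ L.1} = 0 ∨ 2 ≤ Set.ncard {L | L ∈ S ∧ P.1 ≤ L.1}) :
    ∀ P : PGPoint F,
      Set.ncard {L | L ∈ S ∧ P.1 ≤ L.1} ≤ 4 ∨
        q - 1 ≤ Set.ncard {L | L ∈ S ∧ P.1 ≤ L.1} := by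
  haveI : Finite (PGLine F) :=
    inferInstanceAs (Finite {W : Submodule F (Fin 4 → F) // Module.finrank F W = 2})
  haveI : Finite (PGPlane F) :=
    inferInstanceAs (Finite {W : Submodule F (Fin 4 → F) // Module.finrank F W = 3})
  haveI : Fintype (PGLine F) := Fintype.ofFinite _
  haveI : Fintype (PGPlane F) := Fintype.ofFinite _
  intro P
  by_contra hcon
  push_neg at hcon
  obtain ⟨h5, hq2⟩ := hcon
  set Tset : Set (PGLine F) := {L | L ∈ S ∧ P.1 ≤ L.1} with hTset
  set x := Tset.ncard with hx
  -- the finset of lines of `S` through `P`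
  set T : Finset (PGLine F) := (Set.toFinite Tset).toFinset with hT
  have hTcard : T.card = x := by rw [hx, Set.ncard_eq_toFinset_card Tset]
  have hmemT : ∀ {L : PGLine F}, L ∈ T ↔ (L ∈ S ∧ P.1 ≤ L.1) := by
    intro L; rw [hT, Set.Finite.mem_toFinset]; rfl
  have hx5 : 5 ≤ x := by omega
  have hxq : x + 2 ≤ q := by omega
  -- planes through a line
  set planesThru : PGLine F → Finset (PGPlane F) :=
    fun L => Finset.univ.filter (fun π => L.1 ≤ π.1) with hplanesThru
  have hA : ∀ L : PGLine F, q + 1 ≤ (planesThru L).card := by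
    intro L
    obtain ⟨f, hfi, hfc⟩ := exists_planes F L.1 L.2
    calc q + 1 = (Finset.univ : Finset (Option F)).card := by
          simp [Fintype.card_option, hq]
      _ ≤ (planesThru L).card := by
          apply Finset.card_le_card_of_injOn f
          · intro a _
            rw [Finset.mem_coe, hplanesThru, Finset.mem_filter]
            exact ⟨Finset.mem_univ _, hfc a⟩
          · exact hfi.injOn
  -- planes through `L` containing no other line of `T`
  set goodP : PGLine F → Finset (PGPlane F) :=
    fun L => (planesThru L).filter (fun π => ∀ L' ∈ T, L'.1 ≤ π.1 → L' = L) with hgoodP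
  -- Step B : bad planes are few
  have hB : ∀ L ∈ T, q + 2 ≤ (goodP L).card + x := by
    intro L hL
    set badP : Finset (PGPlane F) :=
      (planesThru L).filter (fun π => ¬ ∀ L' ∈ T, L'.1 ≤ π.1 → L' = L) with hbadP
    have hsplit : (goodP L).card + badP.card = (planesThru L).card :=
      Finset.card_filter_add_card_filter_not _
    have hbadcard : badP.card ≤ (T.erase L).card := by
      set g : PGPlane F → PGLine F := fun π =>
        if h : ∃ L', L' ∈ T ∧ L'.1 ≤ π.1 ∧ L' ≠ L then h.choose else L with hg
      apply Finset.card_le_card_of_injOn g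
      · intro π hπ
        rw [Finset.mem_coe, hbadP, Finset.mem_filter] at hπ
        obtain ⟨hπ1, hπ2⟩ := hπ
        push_neg at hπ2
        obtain ⟨L', hL'T, hL'le, hL'ne⟩ := hπ2
        have hex : ∃ L', L' ∈ T ∧ L'.1 ≤ π.1 ∧ L' ≠ L := ⟨L', hL'T, hL'le, hL'ne⟩
        rw [hg]
        simp only [dif_pos hex]
        exact Finset.mem_erase.mpr ⟨hex.choose_spec.2.2, hex.choose_spec.1⟩
      · intro π₁ hπ₁ π₂ hπ₂ hgeq
        simp only [Finset.mem_coe] at hπ₁ hπ₂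
        rw [hbadP, Finset.mem_filter] at hπ₁ hπ₂
        obtain ⟨hπ₁p, hπ₁b⟩ := hπ₁
        obtain ⟨hπ₂p, hπ₂b⟩ := hπ₂
        push_neg at hπ₁b hπ₂b
        obtain ⟨M₁, hM₁T, hM₁le, hM₁ne⟩ := hπ₁b
        obtain ⟨M₂, hM₂T, hM₂le, hM₂ne⟩ := hπ₂b
        have hex₁ : ∃ L', L' ∈ T ∧ L'.1 ≤ π₁.1 ∧ L' ≠ L := ⟨M₁, hM₁T, hM₁le, hM₁ne⟩
        have hex₂ : ∃ L', L' ∈ T ∧ L'.1 ≤ π₂.1 ∧ L' ≠ L := ⟨M₂, hM₂T, hM₂le, hM₂ne⟩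
        rw [hg] at hgeq
        simp only [dif_pos hex₁, dif_pos hex₂] at hgeq
        set L' := hex₁.choose with hL'
        obtain ⟨hc₁T, hc₁le, hc₁ne⟩ := hex₁.choose_spec
        obtain ⟨hc₂T, hc₂le, hc₂ne⟩ := hex₂.choose_spec
        rw [← hgeq] at hc₂le
        -- both planes equal L ⊔ L'
        have hdim3 : Module.finrank F ↥(L.1 ⊔ L'.1) = 3 := by
          apply sup_of_two_lines' F L.2 L'.2 _ P.2 (hmemT.mp hL).2 (hmemT.mp hc₁T).2
          intro h
          exact hc₁ne (Subtype.ext h.symm)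
        have hLπ₁ : L.1 ≤ π₁.1 := by
          rw [hplanesThru, Finset.mem_filter] at hπ₁p; exact hπ₁p.2
        have hLπ₂ : L.1 ≤ π₂.1 := by
          rw [hplanesThru, Finset.mem_filter] at hπ₂p; exact hπ₂p.2
        have he₁ : L.1 ⊔ L'.1 = π₁.1 :=
          Submodule.eq_of_le_of_finrank_le (sup_le hLπ₁ hc₁le) (by rw [hdim3, π₁.2])
        have he₂ : L.1 ⊔ L'.1 = π₂.1 :=
          Submodule.eq_of_le_of_finrank_le (sup_le hLπ₂ hc₂le) (by rw [hdim3, π₂.2])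
        exact Subtype.ext (he₁ ▸ he₂)
    have herase : (T.erase L).card + 1 = x := by
      rw [Finset.card_erase_add_one hL, hTcard]
    have := hA L
    omega
  -- good planes for distinct lines are disjoint
  have hdisj : ∀ L₁ ∈ T, ∀ L₂ ∈ T, L₁ ≠ L₂ → Disjoint (goodP L₁) (goodP L₂) := by
    intro L₁ hL₁ L₂ hL₂ hne
    rw [Finset.disjoint_left]
    intro π hπ₁ hπ₂
    rw [hgoodP, Finset.mem_filter] at hπ₁ hπ₂
    have hle₂ : L₂.1 ≤ π.1 := by
      have := hπ₂.1; rw [hplanesThru, Finset.mem_filter] at this; exact this.2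
    exact hne ((hπ₁.2 L₂ hL₂ hle₂).symm)
  set Pall : Finset (PGPlane F) := T.biUnion goodP with hPall
  have hPcard : Pall.card = ∑ L ∈ T, (goodP L).card := Finset.card_biUnion hdisj
  have hPlower : x * (q + 2) ≤ Pall.card + x * x := by
    have h1 : ∑ L ∈ T, (q + 2) ≤ ∑ L ∈ T, ((goodP L).card + x) :=
      Finset.sum_le_sum hB
    rw [Finset.sum_const, Finset.sum_add_distrib, Finset.sum_const, hTcard, smul_eq_mul,
      smul_eq_mul, ← hPcard] at h1
    omega
  -- the outside lines
  set Eset : Set (PGLine F) := S \ Tset with hEset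
  set E : Finset (PGLine F) := (Set.toFinite Eset).toFinset with hE
  have hEcard : E.card = Eset.ncard := (Set.ncard_eq_toFinset_card Eset).symm
  -- injection from Pall to E
  obtain ⟨L₀, hL₀⟩ := Finset.card_pos.mp (show 0 < T.card by omega)
  have hkey : ∀ π ∈ Pall, ∃ M : PGLine F, M ∈ S ∧ M.1 ≤ π.1 ∧ ¬ P.1 ≤ M.1 := by
    intro π hπ
    rw [hPall, Finset.mem_biUnion] at hπ
    obtain ⟨L, hLT, hLπ⟩ := hπ
    rw [hgoodP, Finset.mem_filter] at hLπ
    obtain ⟨hLp, honly⟩ := hLπ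
    rw [hplanesThru, Finset.mem_filter] at hLp
    have hLmem : L ∈ {L : PGLine F | L ∈ S ∧ L.1 ≤ π.1} := ⟨(hmemT.mp hLT).1, hLp.2⟩
    have h2 : 2 ≤ Set.ncard {L : PGLine F | L ∈ S ∧ L.1 ≤ π.1} := by
      rcases hplane π with h | h
      · exfalso
        rw [Set.ncard_eq_zero (Set.toFinite _)] at h
        rw [h] at hLmem
        exact hLmem
      · exact h
    obtain ⟨M, hMmem, hMne⟩ :=
      Set.exists_ne_of_one_lt_ncard (s := {L : PGLine F | L ∈ S ∧ L.1 ≤ π.1}) (by omega) L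
    refine ⟨M, hMmem.1, hMmem.2, fun hPM => ?_⟩
    exact hMne (honly M (hmemT.mpr ⟨hMmem.1, hPM⟩) hMmem.2)
  have hPπ : ∀ π ∈ Pall, P.1 ≤ π.1 := by
    intro π hπ
    rw [hPall, Finset.mem_biUnion] at hπ
    obtain ⟨L, hLT, hLπ⟩ := hπ
    rw [hgoodP, Finset.mem_filter, hplanesThru, Finset.mem_filter] at hLπ
    exact le_trans (hmemT.mp hLT).2 hLπ.1.2
  have hinj : Pall.card ≤ E.card := by
    set Φ : PGPlane F → PGLine F := fun π =>
      if h : ∃ M : PGLine F, M ∈ S ∧ M.1 ≤ π.1 ∧ ¬ P.1 ≤ M.1 then h.choose else L₀ with hΦ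
    apply Finset.card_le_card_of_injOn Φ
    · intro π hπ
      have hex := hkey π hπ
      rw [hΦ]
      simp only [dif_pos hex]
      rw [Finset.mem_coe, hE, Set.Finite.mem_toFinset, hEset]
      exact ⟨hex.choose_spec.1, fun hmem => hex.choose_spec.2.2 hmem.2⟩
    · intro π₁ hπ₁ π₂ hπ₂ heq
      simp only [Finset.mem_coe] at hπ₁ hπ₂
      have hex₁ := hkey π₁ hπ₁
      have hex₂ := hkey π₂ hπ₂
      rw [hΦ] at heq
      simp only [dif_pos hex₁, dif_pos hex₂] at heq
      set M := hex₁.choose with hM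
      obtain ⟨hM₁S, hM₁le, hM₁P⟩ := hex₁.choose_spec
      obtain ⟨hM₂S, hM₂le, hM₂P⟩ := hex₂.choose_spec
      rw [← heq] at hM₂le
      have hdim3 : Module.finrank F ↥(M.1 ⊔ P.1) = 3 := sup_line_point' F M.2 P.2 hM₁P
      have he₁ : M.1 ⊔ P.1 = π₁.1 :=
        Submodule.eq_of_le_of_finrank_le (sup_le hM₁le (hPπ π₁ hπ₁)) (by rw [hdim3, π₁.2])
      have he₂ : M.1 ⊔ P.1 = π₂.1 :=
        Submodule.eq_of_le_of_finrank_le (sup_le hM₂le (hPπ π₂ hπ₂)) (by rw [hdim3, π₂.2])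
      exact Subtype.ext (he₁ ▸ he₂)
  -- count `S`
  have hScount : Eset.ncard + x = S.ncard := by
    rw [hx, hEset]
    exact Set.ncard_diff_add_ncard_of_subset (fun L hL => hL.1) (Set.toFinite S)
  -- final arithmetic
  have hfin : x * (q + 2) + x ≤ 4 * (q + 1) + x * x := by
    have h1 : Eset.ncard + x ≤ 4 * (q + 1) := hScount ▸ hcard
    have h2 : Pall.card ≤ Eset.ncard := hEcard ▸ hinj
    have h3 := hPlower
    omega
  have hxq' : (x : ℤ) + 2 ≤ (q : ℤ) := by exact_mod_cast hxq
  have hx5' : (5 : ℤ) ≤ (x : ℤ) := by exact_mod_cast hx5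
  have hq16' : (16 : ℤ) ≤ (q : ℤ) := by exact_mod_cast hq16
  have hfin' : (x : ℤ) * ((q : ℤ) + 2) + (x : ℤ) ≤ 4 * ((q : ℤ) + 1) + (x : ℤ) * (x : ℤ) := by
    exact_mod_cast hfin
  nlinarith [mul_nonneg (by linarith : (0:ℤ) ≤ (x:ℤ) - 5) (by linarith : (0:ℤ) ≤ (q:ℤ) - 2 - (x:ℤ))]
end
end

section
/- Let q be a prime power and let R and S be two distinct points of PG(3,q), and pi_1, pi_2 two distinct planes containing the line RS. Let S_L be the set of the 4q lines through R or S, contained in pi_1 or pi_2, and different from the line RS; assign symbol alpha (a nonzero element of F_p) to the lines through R in pi_1 and the lines through S in pi_2, and symbol -alpha to the other lines of S_L. Then every point of PG(3,q) lies on lines of S_L whose symbols sum to zero, and every plane of PG(3,q) contains lines of S_L whose symbols sum to zero. -/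
open scoped Classical

noncomputable section

variable (F : Type*) [Field F] [Fintype F]

set_option linter.unusedSectionVars false

variable {F}


/-- The number of 1-dimensional subspaces of a 2-dimensional space is `q+1`. -/
lemma aux_card_rank1 {M : Type*} [AddCommGroup M] [Module F M]
    (hM : Module.finrank F M = 2) :
    Nat.card {H : Submodule F M // Module.finrank F H = 1} = Fintype.card F + 1 := by
  have : FiniteDimensional F M := FiniteDimensional.of_finrank_eq_succ hM
  have h2 : Module.finrank F M = Module.finrank F (Fin 2 → F) := by simp [hM]
  obtain ⟨e⟩ := FiniteDimensional.nonempty_linearEquiv_of_finrank_eq h2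
  have hsurj : Function.Surjective (Projectivization.map e.toLinearMap e.injective) := by
    intro y
    induction y using Projectivization.ind with
    | h v hv =>
      refine ⟨Projectivization.mk F (e.symm v) (by simp [hv]), ?_⟩
      rw [Projectivization.map_mk]
      rw [Projectivization.mk_eq_mk_iff]
      exact ⟨1, by simp⟩
  have emap : Projectivization F M ≃ Projectivization F (Fin 2 → F) :=
    Equiv.ofBijective _ ⟨Projectivization.map_injective e.toLinearMap e.injective, hsurj⟩
  calc Nat.card {H : Submodule F M // Module.finrank F H = 1}
      = Nat.card (Projectivization F M) :=
        (Nat.card_congr (Projectivization.equivSubmodule F M)).symm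
    _ = Nat.card (Projectivization F (Fin 2 → F)) := Nat.card_congr emap
    _ = Nat.card (OnePoint F) := (Nat.card_congr (OnePoint.equivProjectivization F)).symm
    _ = Fintype.card F + 1 := by simp [OnePoint, Nat.card_eq_fintype_card]

lemma aux_finrank_map_mkQ {M : Type*} [AddCommGroup M] [Module F M] [FiniteDimensional F M]
    (N X : Submodule F M) (h : N ≤ X) :
    Module.finrank F (X.map N.mkQ) + Module.finrank F N = Module.finrank F X := by
  set f : X →ₗ[F] M ⧸ N := N.mkQ.comp X.subtype with hf
  have hr : LinearMap.range f = X.map N.mkQ := by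
    rw [hf, LinearMap.range_comp, Submodule.range_subtype]
  have hk : LinearMap.ker f = N.comap X.subtype := by
    rw [hf, LinearMap.ker_comp, Submodule.ker_mkQ]
  have e := LinearMap.quotKerEquivRange f
  have h1 : Module.finrank F (LinearMap.range f) + Module.finrank F (LinearMap.ker f)
      = Module.finrank F X := by
    rw [← e.finrank_eq]
    exact Submodule.finrank_quotient_add_finrank _
  have h2 : Module.finrank F (N.comap X.subtype) = Module.finrank F N := by
    have hmc : (N.comap X.subtype).map X.subtype = N := by
      rw [Submodule.map_comap_subtype, inf_eq_right.mpr h]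
    conv_rhs => rw [← hmc]
    rw [Submodule.finrank_map_subtype_eq]
  rw [← hr, ← h2, ← hk, h1]

/-- The number of lines through a point inside a plane is `q+1`. -/
lemma aux_card_lines_between (P W : Submodule F (Fin 4 → F))
    (hP : Module.finrank F P = 1) (hW : Module.finrank F W = 3) (hPW : P ≤ W) :
    Nat.card {L : PGLine F // P ≤ L.1 ∧ L.1 ≤ W} = Fintype.card F + 1 := by
  set P₀ : Submodule F W := P.comap W.subtype with hP₀
  have hmapP₀ : P₀.map W.subtype = P := by
    rw [hP₀, Submodule.map_comap_subtype, inf_eq_right.mpr hPW]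
  have hrkP₀ : Module.finrank F P₀ = 1 := by
    rw [← hP, ← hmapP₀, Submodule.finrank_map_subtype_eq]
  have hquot : Module.finrank F (W ⧸ P₀) = 2 := by
    have := Submodule.finrank_quotient_add_finrank P₀
    rw [hrkP₀, hW] at this; omega
  have key : {L : PGLine F // P ≤ L.1 ∧ L.1 ≤ W}
      ≃ {H : Submodule F (W ⧸ P₀) // Module.finrank F H = 1} := by
    refine ⟨fun L => ⟨((L.1.1.comap W.subtype).map P₀.mkQ), ?_⟩,
           fun H => ⟨⟨(H.1.comap P₀.mkQ).map W.subtype, ?_⟩, ?_, ?_⟩, ?_, ?_⟩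
    · -- finrank of image is 1
      obtain ⟨⟨L1, hL2⟩, hPL, hLW⟩ := L
      have hle : P₀ ≤ L1.comap W.subtype := Submodule.comap_mono hPL
      have hmap : (L1.comap W.subtype).map W.subtype = L1 := by
        rw [Submodule.map_comap_subtype, inf_eq_right.mpr hLW]
      have h := Submodule.finrank_map_subtype_eq W (L1.comap W.subtype)
      rw [hmap] at h
      have hrk : Module.finrank F (L1.comap W.subtype) = 2 := by rw [← h]; exact hL2
      have := aux_finrank_map_mkQ P₀ (L1.comap W.subtype) hle
      rw [hrk, hrkP₀] at this
      show Module.finrank F ((L1.comap W.subtype).map P₀.mkQ) = 1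
      omega
    · -- finrank of preimage-image is 2
      have hX : P₀ ≤ H.1.comap P₀.mkQ := by
        intro x hx
        simp [Submodule.mem_comap, (Submodule.Quotient.mk_eq_zero _).mpr hx,
          Submodule.mkQ_apply]
      have hXmap : (H.1.comap P₀.mkQ).map P₀.mkQ = H.1 :=
        Submodule.map_comap_eq_of_surjective (Submodule.mkQ_surjective P₀) _
      have := aux_finrank_map_mkQ P₀ (H.1.comap P₀.mkQ) hX
      rw [hXmap, H.2, hrkP₀] at this
      rw [Submodule.finrank_map_subtype_eq]; omega
    · -- P ≤ the line
      have hX : P₀ ≤ H.1.comap P₀.mkQ := by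
        intro x hx
        simp [Submodule.mem_comap, (Submodule.Quotient.mk_eq_zero _).mpr hx,
          Submodule.mkQ_apply]
      calc P = P₀.map W.subtype := hmapP₀.symm
        _ ≤ (H.1.comap P₀.mkQ).map W.subtype := Submodule.map_mono hX
    · exact Submodule.map_subtype_le _ _
    · -- left inverse
      rintro ⟨⟨L, hL2⟩, hPL, hLW⟩
      have hle : P₀ ≤ L.comap W.subtype := Submodule.comap_mono hPL
      apply Subtype.ext; apply Subtype.ext
      show (((L.comap W.subtype).map P₀.mkQ).comap P₀.mkQ).map W.subtype = L
      rw [Submodule.comap_map_eq, Submodule.ker_mkQ, sup_eq_left.mpr hle,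
        Submodule.map_comap_subtype, inf_eq_right.mpr hLW]
    · -- right inverse
      rintro ⟨H, hH⟩
      apply Subtype.ext
      show (((H.comap P₀.mkQ).map W.subtype).comap W.subtype).map P₀.mkQ = H
      rw [Submodule.comap_map_eq, Submodule.ker_subtype, sup_bot_eq,
        Submodule.map_comap_eq_of_surjective (Submodule.mkQ_surjective P₀)]
  rw [Nat.card_congr key, aux_card_rank1 hquot]

lemma aux_sup_points (P Q : Submodule F (Fin 4 → F))
    (hP : Module.finrank F P = 1) (hQ : Module.finrank F Q = 1) (hne : P ≠ Q) :
    Module.finrank F (P ⊔ Q : Submodule F (Fin 4 → F)) = 2 := by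
  have h := Submodule.finrank_sup_add_finrank_inf_eq P Q
  have hle1 : Module.finrank F (P ⊓ Q : Submodule F (Fin 4 → F)) ≤ 1 := by
    rw [← hP]; exact Submodule.finrank_mono inf_le_left
  have hne1 : Module.finrank F (P ⊓ Q : Submodule F (Fin 4 → F)) ≠ 1 := by
    intro h1
    have e1 : P ⊓ Q = P := Submodule.eq_of_le_of_finrank_le inf_le_left (by omega)
    have e2 : P ⊓ Q = Q := Submodule.eq_of_le_of_finrank_le inf_le_right (by omega)
    exact hne (by rw [← e1, e2])
  rw [hP, hQ] at h; omega

lemma aux_planes_inter (W₁ W₂ : Submodule F (Fin 4 → F))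
    (h1 : Module.finrank F W₁ = 3) (h2 : Module.finrank F W₂ = 3) (hne : W₁ ≠ W₂) :
    Module.finrank F (W₁ ⊓ W₂ : Submodule F (Fin 4 → F)) = 2 := by
  have h := Submodule.finrank_sup_add_finrank_inf_eq W₁ W₂
  have hlt : W₁ < W₁ ⊔ W₂ := by
    refine lt_of_le_of_ne le_sup_left (fun he => ?_)
    have h21 : W₂ ≤ W₁ := he ▸ le_sup_right
    exact hne (Submodule.eq_of_le_of_finrank_le h21 (by omega)).symm
  have h4 : 3 < Module.finrank F (W₁ ⊔ W₂ : Submodule F (Fin 4 → F)) := by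
    rw [← h1]; exact Submodule.finrank_lt_finrank_of_lt hlt
  have h5 : Module.finrank F (W₁ ⊔ W₂ : Submodule F (Fin 4 → F)) ≤ 4 := by
    have := Submodule.finrank_le (W₁ ⊔ W₂ : Submodule F (Fin 4 → F))
    rwa [Module.finrank_fin_fun] at this
  rw [h1, h2] at h; omega

variable (F)

set_option maxHeartbeats 1000000 in
/-- Let `R ≠ S` be points of `PG(3,q)` and `π₁ ≠ π₂` planes through the line `RS`. The
set `S_L` of the `4q` lines through `R` or `S`, inside `π₁` or `π₂`, other than `RS`,
with symbol `α ≠ 0` on the lines through `R` in `π₁` and through `S` in `π₂` and `-α` on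
the remaining ones, has symbols summing to zero at every point and in every plane. -/
theorem quadrangle_configuration_codeword (p q : ℕ) (hp : p.Prime)
    (hq : Fintype.card F = q)
    (R S : PGPoint F) (hRS : R ≠ S)
    (π₁ π₂ : PGPlane F) (hπ : π₁ ≠ π₂)
    (h₁ : R.1 ⊔ S.1 ≤ π₁.1) (h₂ : R.1 ⊔ S.1 ≤ π₂.1)
    (α : ZMod p) (hα : α ≠ 0)
    (SL : Set (PGLine F))
    (hSL : SL = {L : PGLine F | (R.1 ≤ L.1 ∨ S.1 ≤ L.1) ∧
      (L.1 ≤ π₁.1 ∨ L.1 ≤ π₂.1) ∧ L.1 ≠ R.1 ⊔ S.1})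
    (c : PGLine F → ZMod p)
    (hc : ∀ L : PGLine F, c L =
      if L ∈ SL then
        (if (R.1 ≤ L.1 ∧ L.1 ≤ π₁.1) ∨ (S.1 ≤ L.1 ∧ L.1 ≤ π₂.1) then α else -α)
      else 0) :
    SL.ncard = 4 * q ∧
    (∀ P : PGPoint F, ∑ᶠ L ∈ {L : PGLine F | P.1 ≤ L.1}, c L = 0) ∧
    (∀ π : PGPlane F, ∑ᶠ L ∈ {L : PGLine F | L.1 ≤ π.1}, c L = 0) := by
  classical
  set ℓ : Submodule F (Fin 4 → F) := R.1 ⊔ S.1 with hℓdef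
  have hRS' : R.1 ≠ S.1 := fun h => hRS (Subtype.ext h)
  have hπ' : π₁.1 ≠ π₂.1 := fun h => hπ (Subtype.ext h)
  have hℓrk : Module.finrank F ℓ = 2 := aux_sup_points R.1 S.1 R.2 S.2 hRS'
  have hRl : R.1 ≤ ℓ := le_sup_left
  have hSl : S.1 ≤ ℓ := le_sup_right
  have hRπ₁ : R.1 ≤ π₁.1 := le_trans hRl h₁
  have hSπ₁ : S.1 ≤ π₁.1 := le_trans hSl h₁
  have hRπ₂ : R.1 ≤ π₂.1 := le_trans hRl h₂
  have hSπ₂ : S.1 ≤ π₂.1 := le_trans hSl h₂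
  have hinf : π₁.1 ⊓ π₂.1 = ℓ := by
    refine (Submodule.eq_of_le_of_finrank_le (le_inf h₁ h₂) ?_).symm
    rw [aux_planes_inter π₁.1 π₂.1 π₁.2 π₂.2 hπ', hℓrk]
  have fact1 : ∀ L : PGLine F, R.1 ≤ L.1 → S.1 ≤ L.1 → L.1 = ℓ := fun L hR hS =>
    (Submodule.eq_of_le_of_finrank_le (sup_le hR hS) (by rw [hℓrk, L.2])).symm
  have fact2 : ∀ L : PGLine F, L.1 ≤ π₁.1 → L.1 ≤ π₂.1 → L.1 = ℓ := fun L hA hB => by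
    have h : L.1 ≤ ℓ := hinf ▸ le_inf hA hB
    exact Submodule.eq_of_le_of_finrank_le h (by rw [hℓrk, L.2])
  have fact3 : ∀ (L : PGLine F) (A B : PGPoint F), A.1 ≠ B.1 → A.1 ≤ L.1 → B.1 ≤ L.1 →
      L.1 = A.1 ⊔ B.1 := fun L A B hne hA hB =>
    (Submodule.eq_of_le_of_finrank_le (sup_le hA hB)
      (by rw [aux_sup_points A.1 B.1 A.2 B.2 hne, L.2])).symm
  -- family cardinalities
  have hFam : ∀ (X : PGPoint F) (W : PGPlane F), X.1 ≤ W.1 → ℓ ≤ W.1 → X.1 ≤ ℓ →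
      ({L : PGLine F | X.1 ≤ L.1 ∧ L.1 ≤ W.1 ∧ L.1 ≠ ℓ}).ncard = q ∧
      ({L : PGLine F | X.1 ≤ L.1 ∧ L.1 ≤ W.1 ∧ L.1 ≠ ℓ}).Finite := by
    intro X W hXW hlW hXl
    have hT : Nat.card {L : PGLine F // X.1 ≤ L.1 ∧ L.1 ≤ W.1} = q + 1 := by
      rw [aux_card_lines_between X.1 W.1 X.2 W.2 hXW, hq]
    have hTn : ({L : PGLine F | X.1 ≤ L.1 ∧ L.1 ≤ W.1}).ncard = q + 1 := by
      rw [← Nat.card_coe_set_eq]; exact hT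
    have hTfin : ({L : PGLine F | X.1 ≤ L.1 ∧ L.1 ≤ W.1}).Finite := by
      rw [← Set.finite_coe_iff]
      refine (Nat.card_ne_zero.mp ?_).2
      rw [Nat.card_coe_set_eq, hTn]; omega
    have hdiff : {L : PGLine F | X.1 ≤ L.1 ∧ L.1 ≤ W.1 ∧ L.1 ≠ ℓ}
        = {L : PGLine F | X.1 ≤ L.1 ∧ L.1 ≤ W.1} \ {(⟨ℓ, hℓrk⟩ : PGLine F)} := by
      ext L
      simp only [Set.mem_setOf_eq, Set.mem_diff, Set.mem_singleton_iff]
      constructor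
      · rintro ⟨u1, u2, u3⟩
        exact ⟨⟨u1, u2⟩, fun he => u3 (congrArg Subtype.val he)⟩
      · rintro ⟨⟨u1, u2⟩, u3⟩
        exact ⟨u1, u2, fun he => u3 (Subtype.ext he)⟩
    have hmem : (⟨ℓ, hℓrk⟩ : PGLine F) ∈ {L : PGLine F | X.1 ≤ L.1 ∧ L.1 ≤ W.1} := ⟨hXl, hlW⟩
    constructor
    · rw [hdiff]
      exact (Set.ncard_diff_singleton_of_mem hmem).trans
        ((congrArg (fun n => n - 1) hTn).trans (Nat.add_sub_cancel q 1))
    · rw [hdiff]; exact hTfin.diff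
  obtain ⟨hcardA₁, hfinA₁⟩ := hFam R π₁ hRπ₁ h₁ hRl
  obtain ⟨hcardB₁, hfinB₁⟩ := hFam S π₁ hSπ₁ h₁ hSl
  obtain ⟨hcardA₂, hfinA₂⟩ := hFam R π₂ hRπ₂ h₂ hRl
  obtain ⟨hcardB₂, hfinB₂⟩ := hFam S π₂ hSπ₂ h₂ hSl
  set A₁ : Set (PGLine F) := {L : PGLine F | R.1 ≤ L.1 ∧ L.1 ≤ π₁.1 ∧ L.1 ≠ ℓ} with hA₁def
  set B₁ : Set (PGLine F) := {L : PGLine F | S.1 ≤ L.1 ∧ L.1 ≤ π₁.1 ∧ L.1 ≠ ℓ} with hB₁def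
  set A₂ : Set (PGLine F) := {L : PGLine F | R.1 ≤ L.1 ∧ L.1 ≤ π₂.1 ∧ L.1 ≠ ℓ} with hA₂def
  set B₂ : Set (PGLine F) := {L : PGLine F | S.1 ≤ L.1 ∧ L.1 ≤ π₂.1 ∧ L.1 ≠ ℓ} with hB₂def
  -- values of c on the families
  have hmemSL : ∀ L : PGLine F, (R.1 ≤ L.1 ∨ S.1 ≤ L.1) → (L.1 ≤ π₁.1 ∨ L.1 ≤ π₂.1) →
      L.1 ≠ ℓ → L ∈ SL := by
    intro L u1 u2 u3; rw [hSL]; exact ⟨u1, u2, u3⟩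
  have hvA₁ : ∀ L ∈ A₁, c L = α := by
    rintro L ⟨u1, u2, u3⟩
    rw [hc, if_pos (hmemSL L (Or.inl u1) (Or.inl u2) u3), if_pos (Or.inl ⟨u1, u2⟩)]
  have hvB₁ : ∀ L ∈ B₁, c L = -α := by
    rintro L ⟨u1, u2, u3⟩
    rw [hc, if_pos (hmemSL L (Or.inr u1) (Or.inl u2) u3), if_neg]
    rintro (⟨w1, _⟩ | ⟨_, w2⟩)
    · exact u3 (fact1 L w1 u1)
    · exact u3 (fact2 L u2 w2)
  have hvA₂ : ∀ L ∈ A₂, c L = -α := by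
    rintro L ⟨u1, u2, u3⟩
    rw [hc, if_pos (hmemSL L (Or.inl u1) (Or.inr u2) u3), if_neg]
    rintro (⟨_, w1⟩ | ⟨w2, _⟩)
    · exact u3 (fact2 L w1 u2)
    · exact u3 (fact1 L u1 w2)
  have hvB₂ : ∀ L ∈ B₂, c L = α := by
    rintro L ⟨u1, u2, u3⟩
    rw [hc, if_pos (hmemSL L (Or.inr u1) (Or.inr u2) u3), if_pos (Or.inr ⟨u1, u2⟩)]
  have hsupp : ∀ L : PGLine F, c L ≠ 0 → L ∈ SL := by
    intro L h
    by_contra hn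
    rw [hc, if_neg hn] at h
    exact h rfl
  -- disjointness
  have hdAB₁ : Disjoint A₁ B₁ := by
    rw [Set.disjoint_left]
    rintro L ⟨u1, u2, u3⟩ ⟨w1, _, _⟩
    exact u3 (fact1 L u1 w1)
  have hdAB₂ : Disjoint A₂ B₂ := by
    rw [Set.disjoint_left]
    rintro L ⟨u1, u2, u3⟩ ⟨w1, _, _⟩
    exact u3 (fact1 L u1 w1)
  have hd12 : Disjoint (A₁ ∪ B₁) (A₂ ∪ B₂) := by
    rw [Set.disjoint_left]
    rintro L (⟨u1, u2, u3⟩ | ⟨u1, u2, u3⟩) (⟨_, w2, _⟩ | ⟨_, w2, _⟩) <;>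
      exact u3 (fact2 L u2 w2)
  have hdA₁A₂ : Disjoint A₁ A₂ := by
    rw [Set.disjoint_left]
    rintro L ⟨u1, u2, u3⟩ ⟨_, w2, _⟩
    exact u3 (fact2 L u2 w2)
  have hdB₁B₂ : Disjoint B₁ B₂ := by
    rw [Set.disjoint_left]
    rintro L ⟨u1, u2, u3⟩ ⟨_, w2, _⟩
    exact u3 (fact2 L u2 w2)
  -- decomposition of SL
  have hSLeq : SL = (A₁ ∪ B₁) ∪ (A₂ ∪ B₂) := by
    rw [hSL]
    ext L
    constructor
    · rintro ⟨u1 | u1, u2 | u2, u3⟩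
      · exact Or.inl (Or.inl ⟨u1, u2, u3⟩)
      · exact Or.inr (Or.inl ⟨u1, u2, u3⟩)
      · exact Or.inl (Or.inr ⟨u1, u2, u3⟩)
      · exact Or.inr (Or.inr ⟨u1, u2, u3⟩)
    · rintro ((⟨u1, u2, u3⟩ | ⟨u1, u2, u3⟩) | (⟨u1, u2, u3⟩ | ⟨u1, u2, u3⟩))
      · exact ⟨Or.inl u1, Or.inl u2, u3⟩
      · exact ⟨Or.inr u1, Or.inl u2, u3⟩
      · exact ⟨Or.inl u1, Or.inr u2, u3⟩
      · exact ⟨Or.inr u1, Or.inr u2, u3⟩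
  -- sums of constants
  have hconstsum : ∀ (s : Set (PGLine F)) (hs : s.Finite) (b : ZMod p),
      (∀ L ∈ s, c L = b) → ∑ᶠ L ∈ s, c L = s.ncard • b := by
    intro s hs b hb
    rw [finsum_mem_congr rfl hb, finsum_mem_eq_finite_toFinset_sum _ hs, Finset.sum_const,
      Set.ncard_eq_toFinset_card s hs]
  refine ⟨?_, ?_, ?_⟩
  · -- cardinality
    rw [hSLeq, Set.ncard_union_eq hd12 (hfinA₁.union hfinB₁) (hfinA₂.union hfinB₂),
      Set.ncard_union_eq hdAB₁ hfinA₁ hfinB₁, Set.ncard_union_eq hdAB₂ hfinA₂ hfinB₂,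
      hcardA₁, hcardB₁, hcardA₂, hcardB₂]
    ring
  · -- points
    intro P
    by_cases hPR : P.1 = R.1
    · have hiff : ∀ L ∈ Function.support c,
          L ∈ {L : PGLine F | P.1 ≤ L.1} ↔ L ∈ A₁ ∪ A₂ := by
        intro L hLs
        have hLSL := hsupp L hLs
        rw [hSL] at hLSL
        obtain ⟨ho1, ho2, hne⟩ := hLSL
        simp only [Set.mem_setOf_eq, Set.mem_union, hPR, hA₁def, hA₂def]
        constructor
        · intro hRL
          rcases ho2 with u | u
          · exact Or.inl ⟨hRL, u, hne⟩
          · exact Or.inr ⟨hRL, u, hne⟩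
        · rintro (⟨u, _⟩ | ⟨u, _⟩) <;> exact u
      rw [finsum_mem_inter_support_eq' c _ _ hiff,
        finsum_mem_union hdA₁A₂ hfinA₁ hfinA₂,
        hconstsum A₁ hfinA₁ α hvA₁, hconstsum A₂ hfinA₂ (-α) hvA₂,
        hcardA₁, hcardA₂, smul_neg]
      exact add_neg_cancel _
    · by_cases hPS : P.1 = S.1
      · have hiff : ∀ L ∈ Function.support c,
            L ∈ {L : PGLine F | P.1 ≤ L.1} ↔ L ∈ B₁ ∪ B₂ := by
          intro L hLs
          have hLSL := hsupp L hLs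
          rw [hSL] at hLSL
          obtain ⟨ho1, ho2, hne⟩ := hLSL
          simp only [Set.mem_setOf_eq, Set.mem_union, hPS, hB₁def, hB₂def]
          constructor
          · intro hSL'
            rcases ho2 with u | u
            · exact Or.inl ⟨hSL', u, hne⟩
            · exact Or.inr ⟨hSL', u, hne⟩
          · rintro (⟨u, _⟩ | ⟨u, _⟩) <;> exact u
        rw [finsum_mem_inter_support_eq' c _ _ hiff,
          finsum_mem_union hdB₁B₂ hfinB₁ hfinB₂,
          hconstsum B₁ hfinB₁ (-α) hvB₁, hconstsum B₂ hfinB₂ α hvB₂,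
          hcardB₁, hcardB₂, smul_neg]
        exact neg_add_cancel _
      · -- helper: a line of SL through P forces structure
        by_cases hPl : P.1 ≤ ℓ
        · -- no line of SL through P
          have hiff : ∀ L ∈ Function.support c,
              L ∈ {L : PGLine F | P.1 ≤ L.1} ↔ L ∈ (∅ : Set (PGLine F)) := by
            intro L hLs
            have hLSL := hsupp L hLs
            rw [hSL] at hLSL
            obtain ⟨ho1, ho2, hne⟩ := hLSL
            simp only [Set.mem_setOf_eq, Set.mem_empty_iff_false, iff_false]
            intro hPL
            rcases ho1 with u | u
            · have := fact3 L P R hPR hPL u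
              have hsub : P.1 ⊔ R.1 ≤ ℓ := sup_le hPl hRl
              exact hne (Submodule.eq_of_le_of_finrank_le (this ▸ hsub)
                (by rw [hℓrk, L.2]))
            · have := fact3 L P S hPS hPL u
              have hsub : P.1 ⊔ S.1 ≤ ℓ := sup_le hPl hSl
              exact hne (Submodule.eq_of_le_of_finrank_le (this ▸ hsub)
                (by rw [hℓrk, L.2]))
          rw [finsum_mem_inter_support_eq' c _ _ hiff, finsum_mem_empty]
        · by_cases hP1 : P.1 ≤ π₁.1
          · -- two lines P∨R and P∨S in π₁
            have hPR' : P.1 ≠ R.1 := hPR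
            have hPS' : P.1 ≠ S.1 := hPS
            set LR : PGLine F := ⟨P.1 ⊔ R.1, aux_sup_points P.1 R.1 P.2 R.2 hPR'⟩ with hLRdef
            set LS : PGLine F := ⟨P.1 ⊔ S.1, aux_sup_points P.1 S.1 P.2 S.2 hPS'⟩ with hLSdef
            have hLRne : LR.1 ≠ ℓ := fun he => hPl (he ▸ (le_sup_left : P.1 ≤ LR.1))
            have hLSne : LS.1 ≠ ℓ := fun he => hPl (he ▸ (le_sup_left : P.1 ≤ LS.1))
            have hne' : LR ≠ LS := by
              intro he
              refine hLRne (fact1 LR le_sup_right ?_)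
              rw [he]; exact le_sup_right
            have hiff : ∀ L ∈ Function.support c,
                L ∈ {L : PGLine F | P.1 ≤ L.1} ↔ L ∈ ({LR, LS} : Set (PGLine F)) := by
              intro L hLs
              have hLSL := hsupp L hLs
              rw [hSL] at hLSL
              obtain ⟨ho1, ho2, hne⟩ := hLSL
              simp only [Set.mem_setOf_eq, Set.mem_insert_iff, Set.mem_singleton_iff]
              constructor
              · intro hPL
                have hLπ₁ : L.1 ≤ π₁.1 := by
                  rcases ho2 with u | u
                  · exact u
                  · exfalso
                    exact hPl (hinf ▸ le_inf hP1 (le_trans hPL u))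
                rcases ho1 with u | u
                · exact Or.inl (Subtype.ext (fact3 L P R hPR' hPL u))
                · exact Or.inr (Subtype.ext (fact3 L P S hPS' hPL u))
              · rintro (rfl | rfl)
                · exact le_sup_left
                · exact le_sup_left
            have hcLR : c LR = α :=
              hvA₁ LR ⟨le_sup_right, sup_le hP1 hRπ₁, hLRne⟩
            have hcLS : c LS = -α :=
              hvB₁ LS ⟨le_sup_right, sup_le hP1 hSπ₁, hLSne⟩
            rw [finsum_mem_inter_support_eq' c _ _ hiff, finsum_mem_pair hne', hcLR, hcLS]
            exact add_neg_cancel _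
          · by_cases hP2 : P.1 ≤ π₂.1
            · have hPR' : P.1 ≠ R.1 := hPR
              have hPS' : P.1 ≠ S.1 := hPS
              set LR : PGLine F := ⟨P.1 ⊔ R.1, aux_sup_points P.1 R.1 P.2 R.2 hPR'⟩ with hLRdef
              set LS : PGLine F := ⟨P.1 ⊔ S.1, aux_sup_points P.1 S.1 P.2 S.2 hPS'⟩ with hLSdef
              have hLRne : LR.1 ≠ ℓ := fun he => hPl (he ▸ (le_sup_left : P.1 ≤ LR.1))
              have hLSne : LS.1 ≠ ℓ := fun he => hPl (he ▸ (le_sup_left : P.1 ≤ LS.1))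
              have hne' : LR ≠ LS := by
                intro he
                refine hLRne (fact1 LR le_sup_right ?_)
                rw [he]; exact le_sup_right
              have hiff : ∀ L ∈ Function.support c,
                  L ∈ {L : PGLine F | P.1 ≤ L.1} ↔ L ∈ ({LR, LS} : Set (PGLine F)) := by
                intro L hLs
                have hLSL := hsupp L hLs
                rw [hSL] at hLSL
                obtain ⟨ho1, ho2, hne⟩ := hLSL
                simp only [Set.mem_setOf_eq, Set.mem_insert_iff, Set.mem_singleton_iff]
                constructor
                · intro hPL
                  have hLπ₂ : L.1 ≤ π₂.1 := by
                    rcases ho2 with u | u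
                    · exfalso
                      exact hPl (hinf ▸ le_inf (le_trans hPL u) hP2)
                    · exact u
                  rcases ho1 with u | u
                  · exact Or.inl (Subtype.ext (fact3 L P R hPR' hPL u))
                  · exact Or.inr (Subtype.ext (fact3 L P S hPS' hPL u))
                · rintro (rfl | rfl)
                  · exact le_sup_left
                  · exact le_sup_left
              have hcLR : c LR = -α :=
                hvA₂ LR ⟨le_sup_right, sup_le hP2 hRπ₂, hLRne⟩
              have hcLS : c LS = α :=
                hvB₂ LS ⟨le_sup_right, sup_le hP2 hSπ₂, hLSne⟩
              rw [finsum_mem_inter_support_eq' c _ _ hiff, finsum_mem_pair hne', hcLR, hcLS]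
              exact neg_add_cancel _
            · have hiff : ∀ L ∈ Function.support c,
                  L ∈ {L : PGLine F | P.1 ≤ L.1} ↔ L ∈ (∅ : Set (PGLine F)) := by
                intro L hLs
                have hLSL := hsupp L hLs
                rw [hSL] at hLSL
                obtain ⟨ho1, ho2, hne⟩ := hLSL
                simp only [Set.mem_setOf_eq, Set.mem_empty_iff_false, iff_false]
                intro hPL
                rcases ho2 with u | u
                · exact hP1 (le_trans hPL u)
                · exact hP2 (le_trans hPL u)
              rw [finsum_mem_inter_support_eq' c _ _ hiff, finsum_mem_empty]
  · -- planes
    intro π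
    by_cases hπ1 : π.1 = π₁.1
    · have hiff : ∀ L ∈ Function.support c,
          L ∈ {L : PGLine F | L.1 ≤ π.1} ↔ L ∈ A₁ ∪ B₁ := by
        intro L hLs
        have hLSL := hsupp L hLs
        rw [hSL] at hLSL
        obtain ⟨ho1, ho2, hne⟩ := hLSL
        simp only [Set.mem_setOf_eq, Set.mem_union, hπ1, hA₁def, hB₁def]
        constructor
        · intro hLπ
          rcases ho1 with u | u
          · exact Or.inl ⟨u, hLπ, hne⟩
          · exact Or.inr ⟨u, hLπ, hne⟩
        · rintro (⟨_, u, _⟩ | ⟨_, u, _⟩) <;> exact u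
      rw [finsum_mem_inter_support_eq' c _ _ hiff,
        finsum_mem_union hdAB₁ hfinA₁ hfinB₁,
        hconstsum A₁ hfinA₁ α hvA₁, hconstsum B₁ hfinB₁ (-α) hvB₁,
        hcardA₁, hcardB₁, smul_neg]
      exact add_neg_cancel _
    · by_cases hπ2 : π.1 = π₂.1
      · have hiff : ∀ L ∈ Function.support c,
            L ∈ {L : PGLine F | L.1 ≤ π.1} ↔ L ∈ A₂ ∪ B₂ := by
          intro L hLs
          have hLSL := hsupp L hLs
          rw [hSL] at hLSL
          obtain ⟨ho1, ho2, hne⟩ := hLSL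
          simp only [Set.mem_setOf_eq, Set.mem_union, hπ2, hA₂def, hB₂def]
          constructor
          · intro hLπ
            rcases ho1 with u | u
            · exact Or.inl ⟨u, hLπ, hne⟩
            · exact Or.inr ⟨u, hLπ, hne⟩
          · rintro (⟨_, u, _⟩ | ⟨_, u, _⟩) <;> exact u
        rw [finsum_mem_inter_support_eq' c _ _ hiff,
          finsum_mem_union hdAB₂ hfinA₂ hfinB₂,
          hconstsum A₂ hfinA₂ (-α) hvA₂, hconstsum B₂ hfinB₂ α hvB₂,
          hcardA₂, hcardB₂, smul_neg]
        exact neg_add_cancel _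
      · have hππ₁ : π.1 ≠ π₁.1 := hπ1
        have hππ₂ : π.1 ≠ π₂.1 := hπ2
        have hrk1 : Module.finrank F (π.1 ⊓ π₁.1 : Submodule F (Fin 4 → F)) = 2 :=
          aux_planes_inter π.1 π₁.1 π.2 π₁.2 hππ₁
        have hrk2 : Module.finrank F (π.1 ⊓ π₂.1 : Submodule F (Fin 4 → F)) = 2 :=
          aux_planes_inter π.1 π₂.1 π.2 π₂.2 hππ₂
        by_cases hπl : ℓ ≤ π.1
        · -- plane through RS other than π₁, π₂: contains no line of SL
          have hiff : ∀ L ∈ Function.support c,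
              L ∈ {L : PGLine F | L.1 ≤ π.1} ↔ L ∈ (∅ : Set (PGLine F)) := by
            intro L hLs
            have hLSL := hsupp L hLs
            rw [hSL] at hLSL
            obtain ⟨ho1, ho2, hne⟩ := hLSL
            simp only [Set.mem_setOf_eq, Set.mem_empty_iff_false, iff_false]
            intro hLπ
            rcases ho2 with u | u
            · have heq : π.1 ⊓ π₁.1 = ℓ :=
                (Submodule.eq_of_le_of_finrank_le (le_inf hπl h₁)
                  (by rw [hrk1, hℓrk])).symm
              exact hne (heq ▸ Submodule.eq_of_le_of_finrank_le (le_inf hLπ u)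
                (by rw [hrk1, L.2]))
            · have heq : π.1 ⊓ π₂.1 = ℓ :=
                (Submodule.eq_of_le_of_finrank_le (le_inf hπl h₂)
                  (by rw [hrk2, hℓrk])).symm
              exact hne (heq ▸ Submodule.eq_of_le_of_finrank_le (le_inf hLπ u)
                (by rw [hrk2, L.2]))
          rw [finsum_mem_inter_support_eq' c _ _ hiff, finsum_mem_empty]
        · set m₁ : PGLine F := ⟨π.1 ⊓ π₁.1, hrk1⟩ with hm₁def
          set m₂ : PGLine F := ⟨π.1 ⊓ π₂.1, hrk2⟩ with hm₂def
          have hm₁ne : m₁.1 ≠ ℓ := fun he => hπl (he ▸ (inf_le_left : m₁.1 ≤ π.1))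
          have hm₂ne : m₂.1 ≠ ℓ := fun he => hπl (he ▸ (inf_le_left : m₂.1 ≤ π.1))
          have hmne : m₁ ≠ m₂ := by
            intro he
            refine hm₁ne (fact2 m₁ inf_le_right ?_)
            rw [he]; exact inf_le_right
          have huniq : ∀ L : PGLine F, L.1 ≤ π.1 → L.1 ≤ π₁.1 → L = m₁ := by
            intro L u1 u2
            exact Subtype.ext (Submodule.eq_of_le_of_finrank_le (le_inf u1 u2)
              (by rw [hrk1, L.2]))
          have huniq2 : ∀ L : PGLine F, L.1 ≤ π.1 → L.1 ≤ π₂.1 → L = m₂ := by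
            intro L u1 u2
            exact Subtype.ext (Submodule.eq_of_le_of_finrank_le (le_inf u1 u2)
              (by rw [hrk2, L.2]))
          by_cases hπR : R.1 ≤ π.1
          · have hπS : ¬ S.1 ≤ π.1 := fun hS => hπl (sup_le hπR hS)
            have hiff : ∀ L ∈ Function.support c,
                L ∈ {L : PGLine F | L.1 ≤ π.1} ↔ L ∈ ({m₁, m₂} : Set (PGLine F)) := by
              intro L hLs
              have hLSL := hsupp L hLs
              rw [hSL] at hLSL
              obtain ⟨ho1, ho2, hne⟩ := hLSL
              simp only [Set.mem_setOf_eq, Set.mem_insert_iff, Set.mem_singleton_iff]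
              constructor
              · intro hLπ
                rcases ho2 with u | u
                · exact Or.inl (huniq L hLπ u)
                · exact Or.inr (huniq2 L hLπ u)
              · rintro (rfl | rfl)
                · exact inf_le_left
                · exact inf_le_left
            have hcm₁ : c m₁ = α :=
              hvA₁ m₁ ⟨le_inf hπR hRπ₁, inf_le_right, hm₁ne⟩
            have hcm₂ : c m₂ = -α :=
              hvA₂ m₂ ⟨le_inf hπR hRπ₂, inf_le_right, hm₂ne⟩
            rw [finsum_mem_inter_support_eq' c _ _ hiff, finsum_mem_pair hmne, hcm₁, hcm₂]
            exact add_neg_cancel _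
          · by_cases hπS : S.1 ≤ π.1
            · have hiff : ∀ L ∈ Function.support c,
                  L ∈ {L : PGLine F | L.1 ≤ π.1} ↔ L ∈ ({m₁, m₂} : Set (PGLine F)) := by
                intro L hLs
                have hLSL := hsupp L hLs
                rw [hSL] at hLSL
                obtain ⟨ho1, ho2, hne⟩ := hLSL
                simp only [Set.mem_setOf_eq, Set.mem_insert_iff, Set.mem_singleton_iff]
                constructor
                · intro hLπ
                  rcases ho2 with u | u
                  · exact Or.inl (huniq L hLπ u)
                  · exact Or.inr (huniq2 L hLπ u)
                · rintro (rfl | rfl)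
                  · exact inf_le_left
                  · exact inf_le_left
              have hcm₁ : c m₁ = -α :=
                hvB₁ m₁ ⟨le_inf hπS hSπ₁, inf_le_right, hm₁ne⟩
              have hcm₂ : c m₂ = α :=
                hvB₂ m₂ ⟨le_inf hπS hSπ₂, inf_le_right, hm₂ne⟩
              rw [finsum_mem_inter_support_eq' c _ _ hiff, finsum_mem_pair hmne, hcm₁, hcm₂]
              exact neg_add_cancel _
            · have hiff : ∀ L ∈ Function.support c,
                  L ∈ {L : PGLine F | L.1 ≤ π.1} ↔ L ∈ (∅ : Set (PGLine F)) := by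
                intro L hLs
                have hLSL := hsupp L hLs
                rw [hSL] at hLSL
                obtain ⟨ho1, ho2, hne⟩ := hLSL
                simp only [Set.mem_setOf_eq, Set.mem_empty_iff_false, iff_false]
                intro hLπ
                rcases ho1 with u | u
                · exact hπR (le_trans u hLπ)
                · exact hπS (le_trans u hLπ)
              rw [finsum_mem_inter_support_eq' c _ _ hiff, finsum_mem_empty]
end
end
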